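/- J_H = {(τ'(j), ττ'(j')) : j, j' ∈ J} is a normal subgroup of H ⋊_α τ(H): for all h, h₀ ∈ H and j, j₁ ∈ J, (h, τ(h₀)) (τ'(j), ττ'(j₁)) (h, τ(h₀))⁻¹ = (τ'(α'_{hh₀}(j) α'_{hh₀}(j₁) α'_{h₀}(j₁⁻¹)), ττ'(α'_{h₀}(j₁))) ∈ J_H. -/

import Mathlib

theorem JH_normal_conjugation {G H J : Type*} [Group G] [Group H] [Group J]
    (τ : H →* G) (α : G →* MulAut H) (τ' : J →* H) (α' : H →* MulAut J)
    (peiffer1 : ∀ (g : G) (h : H), τ (α g h) = g * τ h * g⁻¹)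
    (peiffer2 : ∀ h h' : H, α (τ h) h' = h * h' * h⁻¹)
    (peiffer1' : ∀ (h : H) (j : J), τ' (α' h j) = h * τ' j * h⁻¹)
    (peiffer2' : ∀ j j' : J, α' (τ' j) j' = j * j' * j⁻¹) :
    ∀ (h h₀ : H) (j j₁ : J),
      (⟨h, τ h₀⟩ : H ⋊[α] G) * ⟨τ' j, τ (τ' j₁)⟩ * (⟨h, τ h₀⟩ : H ⋊[α] G)⁻¹ =
        (⟨τ' (α' (h * h₀) j * α' (h * h₀) j₁ * α' h₀ j₁⁻¹),
          τ (τ' (α' h₀ j₁))⟩ : H ⋊[α] G) ∧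
      (⟨h, τ h₀⟩ : H ⋊[α] G) * ⟨τ' j, τ (τ' j₁)⟩ * (⟨h, τ h₀⟩ : H ⋊[α] G)⁻¹ ∈
        {p : H ⋊[α] G | ∃ j₂ j₂' : J, p = (⟨τ' j₂, τ (τ' j₂')⟩ : H ⋊[α] G)} := by
  intro h h₀ j j₁
  have key : (⟨h, τ h₀⟩ : H ⋊[α] G) * ⟨τ' j, τ (τ' j₁)⟩ * (⟨h, τ h₀⟩ : H ⋊[α] G)⁻¹ =
      (⟨τ' (α' (h * h₀) j * α' (h * h₀) j₁ * α' h₀ j₁⁻¹),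
        τ (τ' (α' h₀ j₁))⟩ : H ⋊[α] G) := by
    ext
    · simp only [SemidirectProduct.mul_left, SemidirectProduct.mul_right,
        SemidirectProduct.inv_left, SemidirectProduct.inv_right, map_mul, map_inv,
        MulAut.mul_apply, peiffer2, peiffer1']
      have hinv : ∀ (x y : H), (α (τ x))⁻¹ y = x⁻¹ * y * x := by
        intro x y
        have h2 := peiffer2 x ((α (τ x))⁻¹ y)
        rw [MulAut.apply_inv_self] at h2
        conv_rhs => rw [h2]
        group
      simp only [hinv]
      group
    · simp only [SemidirectProduct.mul_right, SemidirectProduct.inv_right, peiffer1']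
      rw [map_mul, map_mul, map_inv]
  exact ⟨key, key ▸ ⟨_, _, rfl⟩⟩
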